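/- Let H be a complex Hilbert space with inner product ⟨·,·⟩ conjugate-linear in the first argument, and let T be a densely defined closed unbounded operator on H with domain D(T) and adjoint T† with domain D(T†). Let c ∈ ℝ and assume: Im ⟨u, T u⟩ ≤ c·‖u‖² for every u ∈ D(T), and Im ⟨v, T† v⟩ ≥ −c·‖v‖² for every v ∈ D(T†). Then for every z ∈ ℂ with Im z > c, the operator T − z is a bijection from D(T) onto H; moreover for every f ∈ H the unique u ∈ D(T) with T u − z·u = f satisfies ‖u‖ ≤ ‖f‖ / (Im z − c). In particular T has no spectrum in the half-plane { z : Im z > c }. -/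

import Mathlib

theorem stmt_6 {H : Type*} [NormedAddCommGroup H] [InnerProductSpace ℂ H] [CompleteSpace H]
    (T : H →ₗ.[ℂ] H) (hdense : Dense (T.domain : Set H)) (hclosed : T.IsClosed)
    (c : ℝ)
    (hT : ∀ u : T.domain, (inner ℂ (u : H) (T u) : ℂ).im ≤ c * ‖(u : H)‖ ^ 2)
    (hTadj : ∀ v : T.adjoint.domain,
      -(c * ‖(v : H)‖ ^ 2) ≤ (inner ℂ (v : H) (T.adjoint v) : ℂ).im) :
    ∀ z : ℂ, c < z.im →
      Function.Bijective (fun u : T.domain => T u - z • (u : H)) ∧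
      ∀ u : T.domain, ‖(u : H)‖ ≤ ‖T u - z • (u : H)‖ / (z.im - c) := by
  intro z hz
  have hε0 : 0 < z.im - c := by linarith
  -- The key coercivity estimate
  have key : ∀ u : T.domain, (z.im - c) * ‖(u : H)‖ ≤ ‖T u - z • (u : H)‖ := by
    intro u
    have h1 : (inner ℂ (u : H) (T u - z • (u : H)) : ℂ)
        = inner ℂ (u : H) (T u) - z * ((‖(u : H)‖ : ℂ) ^ 2) := by
      rw [inner_sub_right, inner_smul_right, inner_self_eq_norm_sq_to_K]
      norm_cast
    have h2 : (z.im - c) * ‖(u : H)‖ ^ 2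
        ≤ -((inner ℂ (u : H) (T u - z • (u : H)) : ℂ).im) := by
      have him : ((z : ℂ) * ((‖(u : H)‖ : ℂ) ^ 2)).im = z.im * ‖(u : H)‖ ^ 2 := by
        simp [Complex.mul_im, ← Complex.ofReal_pow]
      rw [h1, Complex.sub_im, him]
      have := hT u
      nlinarith [this]
    have h3 : -((inner ℂ (u : H) (T u - z • (u : H)) : ℂ).im)
        ≤ ‖(u : H)‖ * ‖T u - z • (u : H)‖ := by
      calc -((inner ℂ (u : H) (T u - z • (u : H)) : ℂ).im)
          ≤ |((inner ℂ (u : H) (T u - z • (u : H)) : ℂ).im)| := neg_le_abs _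
        _ ≤ ‖((inner ℂ (u : H) (T u - z • (u : H)) : ℂ))‖ :=
            Complex.abs_im_le_norm _
        _ = ‖(inner ℂ (u : H) (T u - z • (u : H)) : ℂ)‖ := rfl
        _ ≤ ‖(u : H)‖ * ‖T u - z • (u : H)‖ := norm_inner_le_norm _ _
    rcases eq_or_lt_of_le (norm_nonneg (u : H)) with hu | hu
    · rw [← hu, mul_zero]; exact norm_nonneg _
    · have h4 : (z.im - c) * ‖(u : H)‖ ^ 2 ≤ ‖(u : H)‖ * ‖T u - z • (u : H)‖ :=
        h2.trans h3
      nlinarith [h4]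
  -- the range as a submodule
  set L : T.domain →ₗ[ℂ] H := T.toFun - z • T.domain.subtype with hL
  have hLapp : ∀ u : T.domain, L u = T u - z • (u : H) := fun u => rfl
  set R : Submodule ℂ H := LinearMap.range L with hR
  -- injectivity
  have hinj : Function.Injective (fun u : T.domain => T u - z • (u : H)) := by
    intro u v huv
    simp only at huv
    have h0 : T (u - v) - z • ((u - v : T.domain) : H) = 0 := by
      rw [T.map_sub, Submodule.coe_sub, smul_sub, sub_sub_sub_comm, huv, sub_self]
    have := key (u - v)
    rw [h0, norm_zero] at this
    have h5 : ‖((u - v : T.domain) : H)‖ = 0 := by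
      have h6 : 0 ≤ ‖((u - v : T.domain) : H)‖ := norm_nonneg _
      nlinarith
    have h7 : ((u - v : T.domain) : H) = 0 := norm_eq_zero.mp h5
    have h8 : (u - v : T.domain) = 0 := by
      exact Subtype.ext (by simpa using h7)
    exact sub_eq_zero.mp h8
  -- closedness of the range
  have hRclosed : IsClosed (R : Set H) := by
    apply IsSeqClosed.isClosed
    intro g f hg hgf
    choose u hu using hg
    -- the sequence u is Cauchy
    have hcau : CauchySeq fun n => ((u n : H)) := by
      rw [Metric.cauchySeq_iff]
      intro δ hδ
      have hgc := hgf.cauchySeq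
      rw [Metric.cauchySeq_iff] at hgc
      obtain ⟨N, hN⟩ := hgc ((z.im - c) * δ) (by positivity)
      refine ⟨N, fun m hm n hn => ?_⟩
      have h9 : L (u m - u n) = g m - g n := by
        rw [map_sub, hu, hu]
      have h10 := key (u m - u n)
      rw [← hLapp, h9] at h10
      have h11 := hN m hm n hn
      rw [dist_eq_norm] at h11 ⊢
      have h12 : ‖((u m : H)) - ((u n : H))‖ = ‖((u m - u n : T.domain) : H)‖ := by
        simp
      rw [h12]
      nlinarith [norm_nonneg ((u m - u n : T.domain) : H)]
    obtain ⟨x, hx⟩ := cauchySeq_tendsto_of_complete hcau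
    -- T (u n) converges to f + z • x
    have hTu : ∀ n, T (u n) = g n + z • ((u n : H)) := by
      intro n
      have := hu n
      rw [hLapp] at this
      rw [← this]; abel
    have hTlim : Filter.Tendsto (fun n => T (u n)) Filter.atTop (nhds (f + z • x)) := by
      simp only [hTu]
      exact hgf.add ((hx.const_smul z))
    have hmem : ∀ n, (((u n : H)), T (u n)) ∈ T.graph := fun n => T.mem_graph _
    have hlim_mem : (x, f + z • x) ∈ T.graph := by
      have htt : Filter.Tendsto (fun n => (((u n : H)), T (u n))) Filter.atTop
          (nhds (x, f + z • x)) := hx.prodMk_nhds hTlim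
      exact hclosed.mem_of_tendsto htt (Filter.Eventually.of_forall hmem)
    rw [LinearPMap.mem_graph_iff] at hlim_mem
    obtain ⟨y, hy1, hy2⟩ := hlim_mem
    refine ⟨y, ?_⟩
    rw [hLapp, hy2, hy1]
    simp
  -- the orthogonal complement of the range is trivial
  have hRorth : Rᗮ = ⊥ := by
    rw [Submodule.eq_bot_iff]
    intro v hv
    rw [Submodule.mem_orthogonal] at hv
    have hv' : ∀ u : T.domain, (inner ℂ v (T u) : ℂ) = z * inner ℂ v (u : H) := by
      intro u
      have h13 : (inner ℂ (T u - z • (u : H)) v : ℂ) = 0 :=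
        hv _ ⟨u, (hLapp u)⟩
      have h14 : (inner ℂ v (T u - z • (u : H)) : ℂ) = 0 := by
        rw [← inner_conj_symm, h13, map_zero]
      rw [inner_sub_right, inner_smul_right, sub_eq_zero] at h14
      exact h14
    have hvadj : v ∈ T.adjoint.domain := by
      apply LinearPMap.mem_adjoint_domain_of_exists
      refine ⟨(starRingEnd ℂ) z • v, fun u => ?_⟩
      simp only [inner_smul_left, Complex.conj_conj]
      exact (hv' u).symm
    have hvval : T.adjoint ⟨v, hvadj⟩ = (starRingEnd ℂ) z • v := by
      apply LinearPMap.adjoint_apply_eq hdense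
      intro u
      simp only [inner_smul_left, Complex.conj_conj]
      exact (hv' u).symm
    have h15 := hTadj ⟨v, hvadj⟩
    rw [hvval] at h15
    have h16 : (inner ℂ v ((starRingEnd ℂ) z • v) : ℂ).im = -z.im * ‖v‖ ^ 2 := by
      rw [inner_smul_right, inner_self_eq_norm_sq_to_K]
      simp [Complex.mul_im, ← Complex.ofReal_pow]
    simp only [h16] at h15
    have h17 : ‖v‖ ^ 2 ≤ 0 := by nlinarith [sq_nonneg ‖v‖]
    have h18 : ‖v‖ ^ 2 = 0 := le_antisymm h17 (sq_nonneg _)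
    have h19 : ‖v‖ = 0 := by
      exact pow_eq_zero_iff two_ne_zero |>.mp h18
    exact norm_eq_zero.mp h19
  -- range is everything
  haveI : CompleteSpace R := hRclosed.completeSpace_coe
  have hRtop : R = ⊤ := Submodule.orthogonal_eq_bot_iff.mp hRorth
  have hsurj : Function.Surjective (fun u : T.domain => T u - z • (u : H)) := by
    intro f
    have hf : f ∈ R := hRtop ▸ Submodule.mem_top
    obtain ⟨u, hu⟩ := hf
    exact ⟨u, hu⟩
  refine ⟨⟨hinj, hsurj⟩, fun u => ?_⟩
  rw [le_div_iff₀ hε0]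
  have := key u
  nlinarith [this]
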